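/- arXiv:2310.03347 — 8 statements merged into one kernel-verified Lean document; each statement's English description precedes it below -/
import Mathlib

section
/- Let V: ℕ → ℝ≥0 and constants κ ∈ [0,1), c ≥ 0, M ∈ ℕ, and suppose that for all k ∈ ℕ, V(k+1) ≤ κ · max_{θ ∈ [max(0,k-M), k]} V(θ) + c. Then for all k ∈ ℕ, V(k) ≤ κ^{⌊k/(M+1)⌋} · max_{θ ∈ [0, M]} V(θ) + c/(1-κ). -/
theorem razumikhin_decay (V : ℕ → ℝ) (hVpos : ∀ k, 0 ≤ V k)
    (κ c : ℝ) (hκ0 : 0 ≤ κ) (hκ1 : κ < 1) (hc : 0 ≤ c) (M : ℕ)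
    (hrec : ∀ k : ℕ, V (k + 1) ≤
      κ * ((Finset.Icc (k - M) k).sup' (Finset.nonempty_Icc.mpr (Nat.sub_le k M)) V) + c) :
    ∀ k : ℕ, V k ≤
      κ ^ (k / (M + 1)) * ((Finset.Icc 0 M).sup' (Finset.nonempty_Icc.mpr (Nat.zero_le M)) V)
        + c / (1 - κ) := by
  set S := (Finset.Icc 0 M).sup' (Finset.nonempty_Icc.mpr (Nat.zero_le M)) V with hS
  have hS0 : 0 ≤ S := le_trans (hVpos 0) (Finset.le_sup' V (by simp))
  have hden : (0:ℝ) < 1 - κ := by linarith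
  have hD0 : 0 ≤ c / (1 - κ) := div_nonneg hc hden.le
  have key : κ * (c / (1 - κ)) + c = c / (1 - κ) := by field_simp; ring
  intro k
  induction k using Nat.strong_induction_on with
  | _ k ih =>
    by_cases hk : k ≤ M
    · have h0 : k / (M + 1) = 0 := Nat.div_eq_of_lt (by omega)
      rw [h0, pow_zero, one_mul]
      have hVS : V k ≤ S := Finset.le_sup' V (by simp [Finset.mem_Icc]; omega)
      linarith
    · push_neg at hk
      obtain ⟨m, rfl⟩ : ∃ m, k = m + 1 := ⟨k - 1, by omega⟩
      set j := (m + 1) / (M + 1) with hj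
      have hj1 : 1 ≤ j := (Nat.one_le_div_iff (by omega)).mpr (by omega)
      have h2 : j * (M + 1) ≤ m + 1 := Nat.div_mul_le_self _ _
      have hsup : (Finset.Icc (m - M) m).sup'
          (Finset.nonempty_Icc.mpr (Nat.sub_le m M)) V
          ≤ κ ^ (j - 1) * S + c / (1 - κ) := by
        apply Finset.sup'_le
        intro θ hθ
        simp only [Finset.mem_Icc] at hθ
        have h1 := ih θ (by omega)
        have hjθ : j - 1 ≤ θ / (M + 1) := by
          rw [Nat.le_div_iff_mul_le (by omega)]
          calc (j - 1) * (M + 1) = j * (M + 1) - (M + 1) := by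
                rw [Nat.sub_mul, one_mul]
            _ ≤ (m + 1) - (M + 1) := Nat.sub_le_sub_right h2 _
            _ ≤ θ := by omega
        have hpow : κ ^ (θ / (M + 1)) ≤ κ ^ (j - 1) :=
          pow_le_pow_of_le_one hκ0 hκ1.le hjθ
        have := mul_le_mul_of_nonneg_right hpow hS0
        linarith
      have hmul : κ * κ ^ (j - 1) = κ ^ j := by
        rw [← pow_succ']; congr 1; omega
      calc V (m + 1) ≤ κ * ((Finset.Icc (m - M) m).sup'
              (Finset.nonempty_Icc.mpr (Nat.sub_le m M)) V) + c := hrec m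
        _ ≤ κ * (κ ^ (j - 1) * S + c / (1 - κ)) + c :=
            add_le_add_left (mul_le_mul_of_nonneg_left hsup hκ0) c
        _ = κ ^ j * S + c / (1 - κ) := by
            rw [mul_add, ← mul_assoc, hmul]; linarith
end

section
/- Let V: ℕ → ℝ≥0, κ ∈ [0,1), c ≥ 0, M ∈ ℕ, and suppose for all k ∈ ℕ, V(k+1) ≤ κ · max_{θ ∈ [max(0,k-M), k]} V(θ) + c. Then the sequence V is bounded: V(k) ≤ max_{θ ∈ [0,M]} V(θ) + c/(1-κ) for all k. -/
theorem razumikhin_bounded (V : ℕ → ℝ) (hVpos : ∀ k, 0 ≤ V k)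
    (κ c : ℝ) (hκ0 : 0 ≤ κ) (hκ1 : κ < 1) (hc : 0 ≤ c) (M : ℕ)
    (hrec : ∀ k : ℕ, V (k + 1) ≤
      κ * ((Finset.Icc (k - M) k).sup' (Finset.nonempty_Icc.mpr (Nat.sub_le k M)) V) + c) :
    ∀ k : ℕ, V k ≤
      ((Finset.Icc 0 M).sup' (Finset.nonempty_Icc.mpr (Nat.zero_le M)) V) + c / (1 - κ) := by
  set S := (Finset.Icc 0 M).sup' (Finset.nonempty_Icc.mpr (Nat.zero_le M)) V with hS
  have h1κ : 0 < 1 - κ := by linarith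
  have hd : 0 ≤ c / (1 - κ) := div_nonneg hc h1κ.le
  have hS0 : 0 ≤ S := le_trans (hVpos 0)
    (Finset.le_sup' V (Finset.mem_Icc.mpr ⟨Nat.zero_le _, Nat.zero_le _⟩))
  have hB : 0 ≤ S + c / (1 - κ) := by linarith
  intro k
  induction k using Nat.strong_induction_on with
  | _ k ih =>
    match k with
    | 0 =>
      have : V 0 ≤ S := Finset.le_sup' V (Finset.mem_Icc.mpr ⟨Nat.zero_le _, Nat.zero_le _⟩)
      linarith
    | n + 1 =>
      have hsup : (Finset.Icc (n - M) n).sup' (Finset.nonempty_Icc.mpr (Nat.sub_le n M)) V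
          ≤ S + c / (1 - κ) := by
        apply Finset.sup'_le
        intro θ hθ
        exact ih θ (Nat.lt_succ_of_le (Finset.mem_Icc.mp hθ).2)
      have := hrec n
      have hκS : κ * ((Finset.Icc (n - M) n).sup' (Finset.nonempty_Icc.mpr (Nat.sub_le n M)) V)
          ≤ κ * (S + c / (1 - κ)) := mul_le_mul_of_nonneg_left hsup hκ0
      have hcd : c = (1 - κ) * (c / (1 - κ)) := by field_simp
      nlinarith [mul_nonneg hκ0 hS0]
end

section
/- Let V: ℕ → ℝ≥0, κ ∈ [0,1), M ∈ ℕ, and suppose for all k ∈ ℕ, V(k+1) ≤ κ · max_{θ ∈ [max(0,k-M), k]} V(θ). Then V(k) → 0 as k → ∞, and in fact V converges to 0 exponentially: there exist p ≥ 1 and ρ ∈ [0,1) with V(k) ≤ p · ρ^k · max_{θ ∈ [0,M]} V(θ) for all k. -/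
theorem razumikhin_exp_to_zero (V : ℕ → ℝ) (hVpos : ∀ k, 0 ≤ V k)
    (κ : ℝ) (hκ0 : 0 ≤ κ) (hκ1 : κ < 1) (M : ℕ)
    (hrec : ∀ k : ℕ, V (k + 1) ≤
      κ * ((Finset.Icc (k - M) k).sup' (Finset.nonempty_Icc.mpr (Nat.sub_le k M)) V)) :
    Filter.Tendsto V Filter.atTop (nhds 0) ∧
      ∃ p ρ : ℝ, 1 ≤ p ∧ 0 ≤ ρ ∧ ρ < 1 ∧
        ∀ k : ℕ, V k ≤
          p * ρ ^ k * ((Finset.Icc 0 M).sup' (Finset.nonempty_Icc.mpr (Nat.zero_le M)) V) := by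
  set W : ℝ := (Finset.Icc 0 M).sup' (Finset.nonempty_Icc.mpr (Nat.zero_le M)) V with hW
  have hW0 : 0 ≤ W := le_trans (hVpos 0)
    (Finset.le_sup' V (by simp [Finset.mem_Icc]))
  -- base bound: V k ≤ W for all k
  have hbase : ∀ k, V k ≤ W := by
    intro k
    induction k using Nat.strong_induction_on with
    | _ k ih =>
      match k with
      | 0 => exact Finset.le_sup' V (by simp [Finset.mem_Icc])
      | Nat.succ m =>
        calc V (m + 1) ≤ κ * ((Finset.Icc (m - M) m).sup'
              (Finset.nonempty_Icc.mpr (Nat.sub_le m M)) V) := hrec m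
          _ ≤ 1 * W := by
              apply mul_le_mul hκ1.le ?_ ?_ zero_le_one
              · apply Finset.sup'_le
                intro θ hθ
                exact ih θ (Nat.lt_succ_of_le (Finset.mem_Icc.mp hθ).2)
              · exact le_trans (hVpos (m - M)) (Finset.le_sup' V (by
                  simp [Finset.mem_Icc]))
          _ = W := one_mul W
  -- iterated bound
  have hiter : ∀ j, ∀ k, j * (M + 1) ≤ k → V k ≤ κ ^ j * W := by
    intro j
    induction j with
    | zero => intro k _; simpa using hbase k
    | succ j ih =>
      intro k hk
      match k, hk with
      | Nat.succ m, hk =>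
        have hm : j * (M + 1) + M ≤ m := by
          rw [Nat.succ_mul] at hk; omega
        calc V (m + 1) ≤ κ * ((Finset.Icc (m - M) m).sup'
              (Finset.nonempty_Icc.mpr (Nat.sub_le m M)) V) := hrec m
          _ ≤ κ * (κ ^ j * W) := by
              apply mul_le_mul_of_nonneg_left ?_ hκ0
              apply Finset.sup'_le
              intro θ hθ
              exact ih θ (by have := (Finset.mem_Icc.mp hθ).1; omega)
          _ = κ ^ (j + 1) * W := by ring
  have hmain : ∃ p ρ : ℝ, 1 ≤ p ∧ 0 ≤ ρ ∧ ρ < 1 ∧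
      ∀ k : ℕ, V k ≤ p * ρ ^ k * W := by
    rcases eq_or_lt_of_le hκ0 with hκz | hκpos
    · refine ⟨1, 1/2, le_refl 1, by norm_num, by norm_num, ?_⟩
      intro k
      match k with
      | 0 => simpa using hbase 0
      | Nat.succ m =>
        have h0 : V (m + 1) ≤ 0 := by
          have := hrec m
          rw [← hκz, zero_mul] at this
          exact this
        have h1 : (0:ℝ) ≤ 1 * (1/2) ^ (m+1) * W := by positivity
        exact h0.trans h1
    · set ρ : ℝ := κ ^ ((1:ℝ) / (M + 1)) with hρ
      have hρpos : 0 < ρ := Real.rpow_pos_of_pos hκpos _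
      have hρ1 : ρ < 1 := Real.rpow_lt_one hκ0 hκ1 (by positivity)
      have hMne : ((M : ℝ) + 1) ≠ 0 := by positivity
      have hρκ : ρ ^ (M + 1) = κ := by
        rw [hρ, ← Real.rpow_natCast (κ ^ _) (M + 1), ← Real.rpow_mul hκ0]
        push_cast
        rw [one_div, inv_mul_cancel₀ hMne, Real.rpow_one]
      refine ⟨1 / ρ ^ M, ρ, ?_, hρpos.le, hρ1, ?_⟩
      · rw [le_div_iff₀ (by positivity), one_mul]
        exact pow_le_one₀ hρpos.le hρ1.le
      · intro k
        set j := k / (M + 1) with hj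
        have hjk : j * (M + 1) ≤ k := Nat.div_mul_le_self k (M + 1)
        have hkj : k ≤ j * (M + 1) + M := by
          have h := Nat.lt_div_mul_add (a := k) (b := M + 1) (by omega)
          rw [← hj] at h
          omega
        have h1 : V k ≤ κ ^ j * W := hiter j k hjk
        have h2 : ρ ^ (j * (M + 1) + M) ≤ ρ ^ k :=
          pow_le_pow_of_le_one hρpos.le hρ1.le hkj
        have h3 : κ ^ j = ρ ^ (j * (M + 1)) := by
          rw [← hρκ, ← pow_mul, Nat.mul_comm]
        have h4 : κ ^ j ≤ 1 / ρ ^ M * ρ ^ k := by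
          rw [h3, div_mul_eq_mul_div, one_mul, le_div_iff₀ (by positivity)]
          calc ρ ^ (j * (M + 1)) * ρ ^ M = ρ ^ (j * (M + 1) + M) := by
                rw [pow_add]
            _ ≤ ρ ^ k := h2
        calc V k ≤ κ ^ j * W := h1
          _ ≤ (1 / ρ ^ M * ρ ^ k) * W := mul_le_mul_of_nonneg_right h4 hW0
  refine ⟨?_, hmain⟩
  obtain ⟨p, ρ, hp, hρ0, hρ1, hbd⟩ := hmain
  apply squeeze_zero hVpos hbd
  have : Filter.Tendsto (fun k : ℕ => p * ρ ^ k * W) Filter.atTop (nhds (p * 0 * W)) :=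
    (((tendsto_pow_atTop_nhds_zero_of_lt_one hρ0 hρ1).const_mul p).mul_const W)
  simpa using this
end

section
/- Let λ_{ij} (i,j ∈ {1,...,ℓ}) be linear class-K∞ functions (λ_{ij}(s) = a_{ij}·s with a_{ij} > 0) such that every cyclic composition satisfies λ_{i_1 i_2} ∘ λ_{i_2 i_3} ∘ ⋯ ∘ λ_{i_{r-1} i_1} < id for all cycles of length r ≤ ℓ. Equivalently, the spectral condition holds: every product a_{i_1 i_2}·a_{i_2 i_3}·⋯·a_{i_{r-1} i_1} < 1 along any cycle. Then there exist positive reals σ_1,...,σ_ℓ and κ ∈ [0,1) such that σ_i^{-1}·a_{ij}·σ_j ≤ κ for all i,j. -/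
open Finset

noncomputable def SGpad {ι : Type*} [Nonempty ι] {r : ℕ} (f : Fin r → ι) : ℕ → ι :=
  fun t => if h : t < r then f ⟨t, h⟩ else Classical.arbitrary ι

lemma SGpad_lt {ι : Type*} [Nonempty ι] {r : ℕ} (f : Fin r → ι) {t : ℕ} (h : t < r) :
    SGpad f t = f ⟨t, h⟩ := dif_pos h

theorem small_gain_scaling {ι : Type*} [Fintype ι] [Nonempty ι]
    (a : ι → ι → ℝ) (ha : ∀ i j, 0 < a i j)
    (hcycle : ∀ r : ℕ, 1 ≤ r → r ≤ Fintype.card ι → ∀ idx : ℕ → ι,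
      ∏ t ∈ Finset.range r, a (idx t) (idx ((t + 1) % r)) < 1) :
    ∃ σ : ι → ℝ, (∀ i, 0 < σ i) ∧
      ∃ κ : ℝ, 0 ≤ κ ∧ κ < 1 ∧ ∀ i j, (σ i)⁻¹ * a i j * σ j ≤ κ := by
  classical
  set n := Fintype.card ι with hndef
  have hn : 1 ≤ n := Fintype.card_pos
  -- maximal cycle product of length r
  set cprod : ∀ r : ℕ, (Fin r → ι) → ℝ :=
    fun r f => ∏ u ∈ range r, a (SGpad f u) (SGpad f ((u + 1) % r)) with hcproddef
  set cmax : ℕ → ℝ := fun r =>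
    (univ : Finset (Fin r → ι)).sup' univ_nonempty (cprod r) with hcmaxdef
  have hcle : ∀ r (f : Fin r → ι), cprod r f ≤ cmax r :=
    fun r f => Finset.le_sup' (cprod r) (mem_univ f)
  have hcpos : ∀ r, 0 < cmax r := by
    intro r
    have h1 : (0:ℝ) < cprod r (fun _ => Classical.arbitrary ι) :=
      Finset.prod_pos fun u _ => ha _ _
    exact h1.trans_le (hcle r _)
  have hclt : ∀ r, 1 ≤ r → r ≤ n → cmax r < 1 := by
    intro r h1 h2
    rw [hcmaxdef, Finset.sup'_lt_iff]
    intro f _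
    exact hcycle r h1 h2 (SGpad f)
  -- κ
  have hIcc : (Finset.Icc 1 n).Nonempty := ⟨n, Finset.mem_Icc.mpr ⟨hn, le_rfl⟩⟩
  set κ : ℝ := (Finset.Icc 1 n).sup' hIcc (fun r => (cmax r) ^ ((r:ℝ)⁻¹)) with hκdef
  have hκpos : 0 < κ := by
    have h1 : (0:ℝ) < (cmax n) ^ ((n:ℝ)⁻¹) := Real.rpow_pos_of_pos (hcpos n) _
    exact h1.trans_le (Finset.le_sup' (f := fun r : ℕ => (cmax r) ^ ((r:ℝ)⁻¹)) (Finset.mem_Icc.mpr ⟨hn, le_rfl⟩))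
  have hκlt1 : κ < 1 := by
    rw [hκdef, Finset.sup'_lt_iff]
    intro r hr
    simp only [Finset.mem_Icc] at hr
    exact Real.rpow_lt_one (hcpos r).le (hclt r hr.1 hr.2)
      (inv_pos.mpr (by exact_mod_cast Nat.lt_of_lt_of_le Nat.zero_lt_one hr.1))
  have hκpow : ∀ r, 1 ≤ r → r ≤ n → cmax r ≤ κ ^ r := by
    intro r h1 h2
    have hr0 : (r:ℝ) ≠ 0 := by exact_mod_cast Nat.one_le_iff_ne_zero.mp h1
    have h3 : (cmax r) ^ ((r:ℝ)⁻¹) ≤ κ :=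
      Finset.le_sup' (f := fun r : ℕ => (cmax r) ^ ((r:ℝ)⁻¹)) (Finset.mem_Icc.mpr ⟨h1, h2⟩)
    calc cmax r = ((cmax r) ^ ((r:ℝ)⁻¹)) ^ r := by
          rw [← Real.rpow_natCast ((cmax r) ^ ((r:ℝ)⁻¹)) r, ← Real.rpow_mul (hcpos r).le,
            inv_mul_cancel₀ hr0, Real.rpow_one]
      _ ≤ κ ^ r := pow_le_pow_left₀ (Real.rpow_nonneg (hcpos r).le _) h3 r
  -- scaled gains
  set b : ι → ι → ℝ := fun i j => a i j * κ⁻¹ with hbdef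
  have hb : ∀ i j, 0 < b i j := fun i j => mul_pos (ha i j) (inv_pos.mpr hκpos)
  -- path weights
  set W : ℕ → (ℕ → ι) → ℝ := fun m p => ∏ u ∈ range m, b (p (u + 1)) (p u) with hWdef
  have hWpos : ∀ m p, 0 < W m p := fun m p => Finset.prod_pos fun u _ => hb _ _
  -- endpoint-constrained finite families of paths of length < n
  set T : ι → Finset (ℕ × (Fin n → ι)) := fun i =>
    ((range n) ×ˢ (univ : Finset (Fin n → ι))).filter (fun q => SGpad q.2 q.1 = i) with hTdef
  have hT : ∀ i, (T i).Nonempty := by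
    intro i
    refine ⟨(0, fun _ => i), ?_⟩
    simp only [hTdef, Finset.mem_filter, Finset.mem_product, Finset.mem_range, mem_univ,
      and_true, true_and]
    exact ⟨hn, SGpad_lt _ hn⟩
  set σ : ι → ℝ := fun i => (T i).sup' (hT i) (fun q => W q.1 (SGpad q.2)) with hσdef
  have hσ1 : ∀ i, 1 ≤ σ i := by
    intro i
    have h1 : ((0, fun _ => i) : ℕ × (Fin n → ι)) ∈ T i := by
      simp only [hTdef, Finset.mem_filter, Finset.mem_product, Finset.mem_range, mem_univ,
        and_true, true_and]
      exact ⟨hn, SGpad_lt _ hn⟩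
    have h2 := Finset.le_sup' (f := fun q : ℕ × (Fin n → ι) => W q.1 (SGpad q.2)) h1
    have h3 : W 0 (SGpad (fun _ : Fin n => i)) = 1 := Finset.prod_range_zero _
    rw [h3] at h2
    exact h2
  -- Lemma A : short paths are bounded by σ
  have hA : ∀ (p : ℕ → ι) (m : ℕ), m < n → W m p ≤ σ (p m) := by
    intro p m hm
    have hmem : ((m, fun k : Fin n => p k.val) : ℕ × (Fin n → ι)) ∈ T (p m) := by
      simp only [hTdef, Finset.mem_filter, Finset.mem_product, Finset.mem_range, mem_univ,
        and_true, true_and]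
      exact ⟨hm, SGpad_lt _ hm⟩
    have h2 := Finset.le_sup' (f := fun q : ℕ × (Fin n → ι) => W q.1 (SGpad q.2)) hmem
    have h3 : W m (SGpad (fun k : Fin n => p k.val)) = W m p := by
      apply Finset.prod_congr rfl
      intro u hu
      rw [Finset.mem_range] at hu
      rw [SGpad_lt _ (by omega : u + 1 < n), SGpad_lt _ (by omega : u < n)]
    rw [h3] at h2
    exact h2
  -- cycle bound for scaled gains
  have hC : ∀ (p : ℕ → ι) (s r : ℕ), 1 ≤ r → r ≤ n → p s = p (s + r) →
      ∏ x ∈ range r, b (p (s + x + 1)) (p (s + x)) ≤ 1 := by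
    intro p s r h1 h2 hps
    have hprodb : ∏ x ∈ range r, b (p (s + x + 1)) (p (s + x))
        = (∏ x ∈ range r, a (p (s + x + 1)) (p (s + x))) * (κ⁻¹) ^ r := by
      simp only [hbdef]
      rw [Finset.prod_mul_distrib, Finset.prod_const, Finset.card_range]
    have hf : cprod r (fun k : Fin r => p (s + r - k.val))
        = ∏ x ∈ range r, a (p (s + x + 1)) (p (s + x)) := by
      have hcongr : ∀ u ∈ range r, a (SGpad (fun k : Fin r => p (s + r - k.val)) u)
          (SGpad (fun k : Fin r => p (s + r - k.val)) ((u + 1) % r))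
          = (fun x => a (p (s + x + 1)) (p (s + x))) (r - 1 - u) := by
        intro u hu
        rw [Finset.mem_range] at hu
        rw [SGpad_lt _ hu, SGpad_lt _ (Nat.mod_lt _ (by omega))]
        simp only []
        congr 1
        · congr 1; omega
        · rcases Nat.lt_or_ge (u + 1) r with h | h
          · rw [Nat.mod_eq_of_lt h]; congr 1; omega
          · have hur : u + 1 = r := by omega
            rw [hur, Nat.mod_self, Nat.sub_zero]
            have h5 : r - 1 - u = 0 := by omega
            rw [h5, Nat.add_zero]
            exact hps.symm
      calc cprod r (fun k : Fin r => p (s + r - k.val))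
          = ∏ u ∈ range r, (fun x => a (p (s + x + 1)) (p (s + x))) (r - 1 - u) :=
            Finset.prod_congr rfl hcongr
        _ = ∏ x ∈ range r, a (p (s + x + 1)) (p (s + x)) :=
            Finset.prod_range_reflect (fun x => a (p (s + x + 1)) (p (s + x))) r
    have hprodA : ∏ x ∈ range r, a (p (s + x + 1)) (p (s + x)) ≤ κ ^ r := by
      rw [← hf]
      exact (hcle r _).trans (hκpow r h1 h2)
    rw [hprodb]
    calc (∏ x ∈ range r, a (p (s + x + 1)) (p (s + x))) * (κ⁻¹) ^ r
        ≤ κ ^ r * (κ⁻¹) ^ r := mul_le_mul_of_nonneg_right hprodA (by positivity)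
      _ = 1 := by rw [← mul_pow, mul_inv_cancel₀ (ne_of_gt hκpos), one_pow]
  -- main induction: every path is dominated by σ at its endpoint
  have key : ∀ m (p : ℕ → ι), W m p ≤ σ (p m) := by
    intro m
    induction m using Nat.strong_induction_on with
    | _ m ih =>
      intro p
      rcases Nat.lt_or_ge m n with hm | hm
      · exact hA p m hm
      · obtain ⟨k₁, k₂, hne, heq⟩ := Fintype.exists_ne_map_eq_of_card_lt
          (fun k : Fin (n + 1) => p (m - n + k.val)) (by simp; exact hndef.ge)
        have hvne : k₁.val ≠ k₂.val := fun h => hne (Fin.val_injective h)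
        obtain ⟨s, t, hst, htm, hrn, hpst⟩ :
            ∃ s t : ℕ, s < t ∧ t ≤ m ∧ t - s ≤ n ∧ p s = p t := by
          rcases Nat.lt_or_ge k₁.val k₂.val with h | h
          · exact ⟨m - n + k₁.val, m - n + k₂.val, by omega,
              by have := k₂.isLt; omega, by omega, heq⟩
          · have h' : k₂.val < k₁.val := by omega
            exact ⟨m - n + k₂.val, m - n + k₁.val, by omega,
              by have := k₁.isLt; omega, by omega, heq.symm⟩
        set r := t - s with hrdef
        have hr1 : 1 ≤ r := by omega
        set d := m - t with hddef
        set p' : ℕ → ι := fun u => if u ≤ s then p u else p (u + r) with hp'def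
        have hpl : ∀ u, u ≤ s → p' u = p u := by
          intro u hu; simp only [hp'def]; rw [if_pos hu]
        have hpg : ∀ u, s ≤ u → p' u = p (u + r) := by
          intro u hu
          rcases eq_or_lt_of_le hu with h | h
          · have huu : u = s := h.symm
            subst huu
            show (if u ≤ u then p u else p (u + r)) = p (u + r)
            rw [if_pos le_rfl, hpst]
            congr 1
            omega
          · show (if u ≤ s then p u else p (u + r)) = p (u + r)
            rw [if_neg (by omega)]
        have lhs : ∏ u ∈ range m, b (p (u + 1)) (p u)
            = (∏ u ∈ range s, b (p (u + 1)) (p u)) *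
              ((∏ x ∈ range r, b (p (s + x + 1)) (p (s + x))) *
               ∏ x ∈ range d, b (p (s + (r + x) + 1)) (p (s + (r + x)))) := by
          rw [show m = s + (r + d) by omega, Finset.prod_range_add, Finset.prod_range_add]
        have rhs : ∏ u ∈ range (m - r), b (p' (u + 1)) (p' u)
            = (∏ u ∈ range s, b (p (u + 1)) (p u)) *
              ∏ x ∈ range d, b (p (s + (r + x) + 1)) (p (s + (r + x))) := by
          rw [show m - r = s + d by omega, Finset.prod_range_add]
          congr 1
          · apply Finset.prod_congr rfl; intro u hu; rw [Finset.mem_range] at hu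
            rw [hpl (u + 1) (by omega), hpl u (by omega)]
          · apply Finset.prod_congr rfl; intro x hx
            rw [hpg (s + x + 1) (by omega), hpg (s + x) (by omega)]
            congr 2 <;> omega
        have hWsplit : W m p = W (m - r) p' *
            ∏ x ∈ range r, b (p (s + x + 1)) (p (s + x)) := by
          simp only [hWdef]
          rw [lhs, rhs]; ring
        have hCle := hC p s r hr1 (by omega) (by rw [hpst]; congr 1; omega)
        have hWle : W m p ≤ W (m - r) p' := by
          rw [hWsplit]
          calc W (m - r) p' * ∏ x ∈ range r, b (p (s + x + 1)) (p (s + x))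
              ≤ W (m - r) p' * 1 := mul_le_mul_of_nonneg_left hCle (hWpos _ _).le
            _ = W (m - r) p' := mul_one _
        have hfin : p' (m - r) = p m := by
          rw [hpg (m - r) (by omega)]; congr 1; omega
        have hih := ih (m - r) (by omega) p'
        rw [hfin] at hih
        exact hWle.trans hih
  -- the scaling inequality
  have hbσ : ∀ i j, b i j * σ j ≤ σ i := by
    intro i j
    obtain ⟨q, hq, hval⟩ := Finset.exists_mem_eq_sup' (hT j)
      (fun q : ℕ × (Fin n → ι) => W q.1 (SGpad q.2))
    have hq2 : SGpad q.2 q.1 = j :=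
      ((by simpa [hTdef] using hq : q.1 < n ∧ SGpad q.2 q.1 = j)).2
    set m := q.1 with hmdef
    set p : ℕ → ι := SGpad q.2 with hpdef
    set p' : ℕ → ι := fun u => if u ≤ m then p u else i with hp2def
    have h1 : W (m + 1) p' = W m p * b i j := by
      simp only [hWdef]
      rw [Finset.prod_range_succ]
      congr 1
      · apply Finset.prod_congr rfl; intro u hu; rw [Finset.mem_range] at hu
        simp only [hp2def]; rw [if_pos (by omega), if_pos (by omega)]
      · simp only [hp2def]; rw [if_neg (by omega), if_pos (le_refl m)]
        rw [hq2]
    have h2 := key (m + 1) p'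
    have h3 : p' (m + 1) = i := by simp only [hp2def]; rw [if_neg (by omega)]
    rw [h3, h1] at h2
    calc b i j * σ j = W m p * b i j := by
          rw [show σ j = W m p from hval]; ring
      _ ≤ σ i := h2
  refine ⟨σ, fun i => lt_of_lt_of_le zero_lt_one (hσ1 i), κ, hκpos.le, hκlt1, ?_⟩
  intro i j
  have hσi : 0 < σ i := lt_of_lt_of_le zero_lt_one (hσ1 i)
  have h4 : a i j * σ j ≤ κ * σ i := by
    have h5 : a i j = κ * b i j := by
      simp only [hbdef]
      field_simp
    rw [h5, mul_assoc]
    exact mul_le_mul_of_nonneg_left (hbσ i j) hκpos.le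
  have h6 : (σ i)⁻¹ * a i j * σ j = (a i j * σ j) / σ i := by ring
  rw [h6, div_le_iff₀ hσi]
  exact h4
end

section
/- Suppose for each i ∈ {1,...,ℓ} there is a function V_i: ℕ → ℝ≥0 and constants a_{ij} ≥ 0 and b ≥ 0 such that V_i(k+1) ≤ max_{θ ∈ [max(0,k-M),k], j} a_{ij}·V_j(θ) + b for all k. Suppose moreover there exist positive reals σ_1,...,σ_ℓ and κ ∈ [0,1) with a_{ij}·σ_j/σ_i ≤ κ for all i,j. Then V(k) := max_i V_i(k)/σ_i satisfies V(k+1) ≤ κ·max_{θ ∈ [max(0,k-M),k]} V(θ) + b·max_i(1/σ_i) for all k. -/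
theorem small_gain_composite_lyapunov {ι : Type*} [Fintype ι] [Nonempty ι]
    (V : ι → ℕ → ℝ) (hVpos : ∀ i k, 0 ≤ V i k)
    (a : ι → ι → ℝ) (ha : ∀ i j, 0 ≤ a i j) (b : ℝ) (hb : 0 ≤ b) (M : ℕ)
    (hrec : ∀ i (k : ℕ), V i (k + 1) ≤
      (((Finset.Icc (k - M) k) ×ˢ (Finset.univ : Finset ι)).sup'
        (Finset.Nonempty.product (Finset.nonempty_Icc.mpr (Nat.sub_le k M)) Finset.univ_nonempty)
        (fun p => a i p.2 * V p.2 p.1)) + b)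
    (σ : ι → ℝ) (hσ : ∀ i, 0 < σ i) (κ : ℝ) (hκ0 : 0 ≤ κ) (hκ1 : κ < 1)
    (hsg : ∀ i j, a i j * σ j / σ i ≤ κ) :
    ∀ k : ℕ,
      (Finset.univ.sup' Finset.univ_nonempty fun i => V i (k + 1) / σ i) ≤
        κ * ((Finset.Icc (k - M) k).sup' (Finset.nonempty_Icc.mpr (Nat.sub_le k M))
              (fun θ => Finset.univ.sup' Finset.univ_nonempty fun i => V i θ / σ i))
          + b * (Finset.univ.sup' Finset.univ_nonempty fun i => 1 / σ i) := by
  intro k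
  set T : ℝ := (Finset.Icc (k - M) k).sup' (Finset.nonempty_Icc.mpr (Nat.sub_le k M))
      (fun θ => Finset.univ.sup' Finset.univ_nonempty fun i => V i θ / σ i) with hT
  have hTnn : 0 ≤ T := by
    refine le_trans ?_ (Finset.le_sup' _ (Finset.mem_Icc.mpr ⟨le_refl _, Nat.sub_le k M⟩))
    obtain ⟨i⟩ := ‹Nonempty ι›
    refine le_trans ?_ (Finset.le_sup' _ (Finset.mem_univ i))
    exact div_nonneg (hVpos i _) (hσ i).le
  apply Finset.sup'_le
  intro i _
  have hσi := hσ i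
  have h1 : V i (k + 1) / σ i ≤
      ((((Finset.Icc (k - M) k) ×ˢ (Finset.univ : Finset ι)).sup'
        (Finset.Nonempty.product (Finset.nonempty_Icc.mpr (Nat.sub_le k M)) Finset.univ_nonempty)
        (fun p => a i p.2 * V p.2 p.1)) + b) / σ i :=
    div_le_div_of_nonneg_right (hrec i k) hσi.le
  rw [add_div] at h1
  refine h1.trans (add_le_add ?_ ?_)
  · rw [div_le_iff₀ hσi]
    apply Finset.sup'_le
    rintro ⟨θ, j⟩ hp
    simp only [Finset.mem_product, Finset.mem_univ, and_true] at hp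
    have hVT : V j θ ≤ T * σ j := by
      have : V j θ / σ j ≤ T := by
        refine le_trans (Finset.le_sup' (fun i => V i θ / σ i) (Finset.mem_univ j)) ?_
        exact Finset.le_sup' (fun θ => Finset.univ.sup' Finset.univ_nonempty fun i => V i θ / σ i) hp
      calc V j θ = (V j θ / σ j) * σ j := (div_mul_cancel₀ _ (hσ j).ne').symm
        _ ≤ T * σ j := mul_le_mul_of_nonneg_right this (hσ j).le
    have haσ : a i j * σ j ≤ κ * σ i := by
      have := hsg i j
      rwa [div_le_iff₀ hσi] at this
    calc a i j * V j θ ≤ a i j * (T * σ j) :=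
          mul_le_mul_of_nonneg_left hVT (ha i j)
      _ = (a i j * σ j) * T := by ring
      _ ≤ (κ * σ i) * T := mul_le_mul_of_nonneg_right haσ hTnn
      _ = κ * T * σ i := by ring
  · rw [div_eq_mul_one_div]
    exact mul_le_mul_of_nonneg_left (Finset.le_sup' (fun i => 1 / σ i) (Finset.mem_univ i)) hb
end

section
/- Let x̂_i(k) = d̂_i(k) − d_i be the estimation error of node i in the unperturbed biased min-consensus iteration with nominal weights. Then for every non-source node i and every k: if x̂_i(k+1) ≥ 0 then |x̂_i(k+1)| ≤ |x̂_j(k)| where j is any true constraining node of i (a minimizer of d_j + w_{ij}); and if x̂_i(k+1) < 0 then |x̂_i(k+1)| ≤ |x̂_j(k)| where j is the minimizer of d̂_j(k) + w_{ij}. -/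
/-- The weight (length) of a walk: the sum of the weights of its constituent edges. -/
def SimpleGraph.Walk.weightSum {V : Type*} {G : SimpleGraph V} (w : V → V → ℝ)
    {a b : V} (p : G.Walk a b) : ℝ :=
  (p.darts.map fun d => w d.toProd.1 d.toProd.2).sum

/-- The length of the shortest weighted path from `i` to its nearest source in `S`. -/
noncomputable def distToSource {V : Type*} (G : SimpleGraph V) (w : V → V → ℝ)
    (S : Set V) (i : V) : ℝ :=
  sInf {c : ℝ | ∃ s ∈ S, ∃ p : G.Walk i s, p.weightSum w = c}

lemma weightSum_nonneg {V : Type*} {G : SimpleGraph V} (w : V → V → ℝ)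
    (hw_pos : ∀ i j, G.Adj i j → 0 < w i j) {a b : V} (p : G.Walk a b) :
    0 ≤ p.weightSum w := by
  apply List.sum_nonneg
  intro x hx
  obtain ⟨dd, _, rfl⟩ := List.mem_map.mp hx
  exact (hw_pos _ _ dd.adj).le

lemma dist_triangle' {V : Type*} (G : SimpleGraph V) (hG : G.Connected)
    (w : V → V → ℝ) (hw_pos : ∀ i j, G.Adj i j → 0 < w i j)
    (S : Set V) (hS : S.Nonempty) {i j : V} (hij : G.Adj i j) :
    distToSource G w S i ≤ distToSource G w S j + w i j := by
  obtain ⟨s, hs⟩ := hS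
  have hBne : {c : ℝ | ∃ s ∈ S, ∃ p : G.Walk j s, p.weightSum w = c}.Nonempty :=
    ⟨(hG.preconnected j s).some.weightSum w, s, hs, _, rfl⟩
  have hAbdd : BddBelow {c : ℝ | ∃ s ∈ S, ∃ p : G.Walk i s, p.weightSum w = c} := by
    refine ⟨0, ?_⟩
    rintro c ⟨t, _, p, rfl⟩
    exact weightSum_nonneg w hw_pos p
  have h : distToSource G w S i - w i j ≤
      sInf {c : ℝ | ∃ s ∈ S, ∃ p : G.Walk j s, p.weightSum w = c} := by
    refine le_csInf hBne ?_
    rintro b ⟨t, ht, p, rfl⟩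
    have hmem : (SimpleGraph.Walk.cons hij p).weightSum w ∈
        {c : ℝ | ∃ s ∈ S, ∃ p : G.Walk i s, p.weightSum w = c} := ⟨t, ht, _, rfl⟩
    have hle : distToSource G w S i ≤ (SimpleGraph.Walk.cons hij p).weightSum w :=
      csInf_le hAbdd hmem
    have hcons : (SimpleGraph.Walk.cons hij p).weightSum w = w i j + p.weightSum w := by
      simp [SimpleGraph.Walk.weightSum]
    linarith
  have h2 : sInf {c : ℝ | ∃ s ∈ S, ∃ p : G.Walk j s, p.weightSum w = c} =
      distToSource G w S j := rfl
  rw [h2] at h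
  linarith

theorem error_nonexpansive {V : Type*} [Fintype V] (G : SimpleGraph V) (hG : G.Connected)
    (w : V → V → ℝ) (hw_pos : ∀ i j, G.Adj i j → 0 < w i j)
    (hw_symm : ∀ i j, w i j = w j i)
    (S : Set V) (hS : S.Nonempty) (hSproper : S ≠ Set.univ)
    (d : V → ℝ) (hd : d = distToSource G w S)
    (dhat : ℕ → V → ℝ)
    (h0 : ∀ i, 0 ≤ dhat 0 i)
    (hsrc : ∀ k : ℕ, ∀ i ∈ S, dhat k i = 0)
    (hrec : ∀ k : ℕ, ∀ i ∉ S, dhat (k + 1) i =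
      sInf {x : ℝ | ∃ j, G.Adj i j ∧ x = dhat k j + w i j}) :
    ∀ k : ℕ, ∀ i ∉ S,
      (0 ≤ dhat (k + 1) i - d i →
        ∀ j, G.Adj i j → d i = d j + w i j →
          |dhat (k + 1) i - d i| ≤ |dhat k j - d j|) ∧
      (dhat (k + 1) i - d i < 0 →
        ∀ j, G.Adj i j → (∀ l, G.Adj i l → dhat k j + w i j ≤ dhat k l + w i l) →
          |dhat (k + 1) i - d i| ≤ |dhat k j - d j|) := by
  intro k i hi
  set T := {x : ℝ | ∃ j, G.Adj i j ∧ x = dhat k j + w i j} with hT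
  have hTfin : T.Finite := by
    have : T ⊆ (fun j => dhat k j + w i j) '' Set.univ := by
      rintro x ⟨j, _, rfl⟩; exact ⟨j, trivial, rfl⟩
    exact Set.Finite.subset (Set.Finite.image _ (Set.finite_univ)) this
  have hTbdd : BddBelow T := hTfin.bddBelow
  have hrec' : dhat (k + 1) i = sInf T := hrec k i hi
  constructor
  · intro hpos j hij hdij
    have hmem : dhat k j + w i j ∈ T := ⟨j, hij, rfl⟩
    have hle : dhat (k + 1) i ≤ dhat k j + w i j := hrec' ▸ csInf_le hTbdd hmem
    have h1 : dhat (k + 1) i - d i ≤ dhat k j - d j := by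
      rw [hdij]; linarith
    rw [abs_of_nonneg hpos]
    exact le_trans h1 (le_abs_self _)
  · intro hneg j hij hmin
    have hmem : dhat k j + w i j ∈ T := ⟨j, hij, rfl⟩
    have hEq : dhat (k + 1) i = dhat k j + w i j := by
      rw [hrec']
      refine le_antisymm (csInf_le hTbdd hmem) (le_csInf ⟨_, hmem⟩ ?_)
      rintro x ⟨l, hl, rfl⟩
      exact hmin l hl
    have htri : d i ≤ d j + w i j := by
      rw [hd]; exact dist_triangle' G hG w hw_pos S hS hij
    have h1 : dhat k j - d j ≤ dhat (k + 1) i - d i := by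
      rw [hEq]; linarith
    rw [abs_of_neg hneg]
    calc -(dhat (k + 1) i - d i) ≤ -(dhat k j - d j) := by linarith
      _ ≤ |dhat k j - d j| := neg_le_abs _
end

section
/- In the unperturbed biased min-consensus iteration with nonnegative initial estimates, if i ∉ S, x̂_i(k+1) < 0, and the current constraining node j (minimizer of d̂_j(k) + w_{ij}) is not a true constraining node of i, then |x̂_i(k+1)| ≤ ζ·|x̂_j(k)| + ζ·0, i.e., the error contracts by factor ζ, where ζ ∈ (0,1) is the constant satisfying d_i/(d_l + w_{il}) ≤ ζ for all non-true-constraining neighbors l. -/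
lemma distToSource_nonneg {V : Type*} (G : SimpleGraph V) (hG : G.Connected)
    (w : V → V → ℝ) (hw_pos : ∀ i j, G.Adj i j → 0 < w i j)
    (S : Set V) (hS : S.Nonempty) (v : V) : 0 ≤ distToSource G w S v := by
  obtain ⟨s, hs⟩ := hS
  obtain ⟨p⟩ := hG v s
  apply le_csInf
  · exact ⟨p.weightSum w, s, hs, p, rfl⟩
  rintro c ⟨t, ht, q, rfl⟩
  exact weightSum_nonneg w hw_pos q

theorem error_contracts_by_zeta {V : Type*} [Fintype V] (G : SimpleGraph V) (hG : G.Connected)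
    (w : V → V → ℝ) (hw_pos : ∀ i j, G.Adj i j → 0 < w i j)
    (hw_symm : ∀ i j, w i j = w j i)
    (S : Set V) (hS : S.Nonempty) (hSproper : S ≠ Set.univ)
    (d : V → ℝ) (hd : d = distToSource G w S)
    (dhat : ℕ → V → ℝ)
    (h0 : ∀ i, 0 ≤ dhat 0 i)
    (hsrc : ∀ k : ℕ, ∀ i ∈ S, dhat k i = 0)
    (hrec : ∀ k : ℕ, ∀ i ∉ S, dhat (k + 1) i =
      sInf {x : ℝ | ∃ j, G.Adj i j ∧ x = dhat k j + w i j})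
    (ζ : ℝ) (hζ0 : 0 < ζ) (hζ1 : ζ < 1)
    (k : ℕ) (i : V) (hiS : i ∉ S)
    (hζ : ∀ l, G.Adj i l → d i ≠ d l + w i l → d i ≤ ζ * (d l + w i l))
    (j : V) (hij : G.Adj i j)
    (hmin : ∀ l, G.Adj i l → dhat k j + w i j ≤ dhat k l + w i l)
    (hnottrue : d i ≠ d j + w i j)
    (hneg : dhat (k + 1) i - d i < 0) :
    |dhat (k + 1) i - d i| ≤ ζ * |dhat k j - d j| := by
  -- nonnegativity of dhat at all times
  have hnbr : ∀ v : V, v ∉ S → ∃ u, G.Adj v u := by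
    intro v hv
    obtain ⟨s, hs⟩ := hS
    obtain ⟨p⟩ := hG v s
    cases p with
    | nil => exact absurd hs hv
    | cons h q => exact ⟨_, h⟩
  have hdhat_nonneg : ∀ m v, 0 ≤ dhat m v := by
    intro m
    induction m with
    | zero => exact h0
    | succ m ih =>
      intro v
      by_cases hv : v ∈ S
      · rw [hsrc _ _ hv]
      · rw [hrec m v hv]
        obtain ⟨u, hu⟩ := hnbr v hv
        apply le_csInf
        · exact ⟨dhat m u + w v u, u, hu, rfl⟩
        rintro x ⟨l, hl, rfl⟩
        have := hw_pos v l hl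
        have := ih l
        linarith
  -- value of the iteration
  have hval : dhat (k + 1) i = dhat k j + w i j := by
    rw [hrec k i hiS]
    apply IsLeast.csInf_eq
    constructor
    · exact ⟨j, hij, rfl⟩
    · rintro x ⟨l, hl, rfl⟩
      exact hmin l hl
  have hdi : d i ≤ ζ * (d j + w i j) := hζ j hij hnottrue
  have hdj : 0 ≤ d j := by rw [hd]; exact distToSource_nonneg G hG w hw_pos S hS j
  have hwij : 0 < w i j := hw_pos i j hij
  have hdh : 0 ≤ dhat k j := hdhat_nonneg k j
  rw [abs_of_neg hneg, hval]
  rcases le_or_gt (d j) (dhat k j) with h1 | h1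
  · have : 0 ≤ dhat k j - d j := by linarith
    rw [abs_of_nonneg this]
    nlinarith
  · have : dhat k j - d j < 0 := by linarith
    rw [abs_of_neg this]
    nlinarith
end

section
/- Let V: ℕ → ℝ≥0, ζ ∈ (0,1), M ∈ ℕ, c ≥ 0, and suppose V(k+1) ≤ ζ·max_{θ∈[max(0,k−M),k]} V(θ) + c for all k ≥ M. Then for all k ≥ M, V(k+1) ≤ ζ^{(k−M+1)/(M+1)}·max_{θ∈[0,M]} V(θ) + c/(1−ζ), where the exponent is interpreted as a real power. -/
theorem razumikhin_explicit_bound_from_M (V : ℕ → ℝ) (hVpos : ∀ k, 0 ≤ V k)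
    (ζ c : ℝ) (hζ0 : 0 < ζ) (hζ1 : ζ < 1) (hc : 0 ≤ c) (M : ℕ)
    (hrec : ∀ k : ℕ, M ≤ k → V (k + 1) ≤
      ζ * ((Finset.Icc (k - M) k).sup' (Finset.nonempty_Icc.mpr (Nat.sub_le k M)) V) + c) :
    ∀ k : ℕ, M ≤ k → V (k + 1) ≤
      ζ ^ ((((k : ℝ) - (M : ℝ) + 1)) / ((M : ℝ) + 1)) *
        ((Finset.Icc 0 M).sup' (Finset.nonempty_Icc.mpr (Nat.zero_le M)) V) + c / (1 - ζ) := by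
  set S := (Finset.Icc 0 M).sup' (Finset.nonempty_Icc.mpr (Nat.zero_le M)) V with hS
  have hS0 : 0 ≤ S := le_trans (hVpos 0) (Finset.le_sup' V (by simp))
  have h1ζ : (0:ℝ) < 1 - ζ := by linarith
  have hcr : 0 ≤ c / (1 - ζ) := div_nonneg hc h1ζ.le
  have hM1 : (0:ℝ) < (M:ℝ) + 1 := by positivity
  have key : ∀ j : ℕ, V j ≤ ζ ^ (max 0 ((j:ℝ) - M) / ((M:ℝ)+1)) * S + c / (1 - ζ) := by
    intro j
    induction j using Nat.strong_induction_on with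
    | _ j ih =>
      rcases le_or_gt j M with hj | hj
      · have hVS : V j ≤ S := Finset.le_sup' V (by simp [hj])
        have hjr : (j:ℝ) ≤ M := by exact_mod_cast hj
        have hmx : max 0 ((j:ℝ) - M) = 0 := max_eq_left (by linarith)
        rw [hmx, zero_div, Real.rpow_zero, one_mul]
        linarith
      · obtain ⟨k, rfl⟩ : ∃ k, j = k + 1 := ⟨j - 1, by omega⟩
        have hk : M ≤ k := by omega
        have hkr : (M:ℝ) ≤ k := by exact_mod_cast hk
        set e₀ : ℝ := max 0 ((k:ℝ) - M - M) / ((M:ℝ)+1) with he₀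
        have hsup : (Finset.Icc (k - M) k).sup' (Finset.nonempty_Icc.mpr (Nat.sub_le k M)) V
            ≤ ζ ^ e₀ * S + c / (1 - ζ) := by
          apply Finset.sup'_le
          intro θ hθ
          simp only [Finset.mem_Icc] at hθ
          have h1 := ih θ (by omega)
          have hθr : (k:ℝ) - M ≤ (θ:ℝ) := by
            have h2 : ((k - M : ℕ):ℝ) ≤ (θ:ℝ) := by exact_mod_cast hθ.1
            rwa [Nat.cast_sub hk] at h2
          have hexp : e₀ ≤ max 0 ((θ:ℝ) - M) / ((M:ℝ)+1) := by
            apply div_le_div_of_nonneg_right ?_ hM1.le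
            exact max_le_max le_rfl (by linarith)
          have hpow : ζ ^ (max 0 ((θ:ℝ) - M) / ((M:ℝ)+1)) ≤ ζ ^ e₀ :=
            Real.rpow_le_rpow_of_exponent_ge hζ0 hζ1.le hexp
          have := mul_le_mul_of_nonneg_right hpow hS0
          linarith
        have h2 := hrec k hk
        have h3 : V (k+1) ≤ ζ * (ζ ^ e₀ * S + c / (1 - ζ)) + c := by
          have := mul_le_mul_of_nonneg_left hsup hζ0.le
          linarith
        have hζe : ζ * ζ ^ e₀ = ζ ^ (1 + e₀) := by
          rw [Real.rpow_add hζ0, Real.rpow_one]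
        have hcc : ζ * (c / (1 - ζ)) + c = c / (1 - ζ) := by
          field_simp
          ring
        have h4 : V (k+1) ≤ ζ ^ (1 + e₀) * S + c / (1 - ζ) := by
          calc V (k+1) ≤ ζ * (ζ ^ e₀ * S + c / (1 - ζ)) + c := h3
            _ = ζ * ζ ^ e₀ * S + (ζ * (c / (1 - ζ)) + c) := by ring
            _ = ζ ^ (1 + e₀) * S + c / (1 - ζ) := by rw [hζe, hcc]
        have hEle : max 0 (((k+1 : ℕ):ℝ) - M) / ((M:ℝ)+1) ≤ 1 + e₀ := by
          push_cast
          rw [he₀]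
          have hmx : max 0 ((k:ℝ) + 1 - M) = (k:ℝ) + 1 - M := max_eq_right (by linarith)
          rw [hmx]
          have hle : ((k:ℝ)+1-M) ≤ ((M:ℝ)+1) + max 0 ((k:ℝ)-M-M) := by
            have := le_max_right (0:ℝ) ((k:ℝ)-M-M)
            linarith
          calc ((k:ℝ)+1-M) / ((M:ℝ)+1) ≤ (((M:ℝ)+1) + max 0 ((k:ℝ)-M-M)) / ((M:ℝ)+1) :=
                div_le_div_of_nonneg_right hle hM1.le
            _ = 1 + max 0 ((k:ℝ)-M-M) / ((M:ℝ)+1) := by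
                rw [add_div, div_self hM1.ne']
        have hpow2 : ζ ^ (1 + e₀) ≤ ζ ^ (max 0 (((k+1 : ℕ):ℝ) - M) / ((M:ℝ)+1)) :=
          Real.rpow_le_rpow_of_exponent_ge hζ0 hζ1.le hEle
        have := mul_le_mul_of_nonneg_right hpow2 hS0
        linarith
      
  intro k hk
  have hkr : (M:ℝ) ≤ k := by exact_mod_cast hk
  have h1 := key (k+1)
  have hmx : max 0 (((k+1:ℕ):ℝ) - M) = (k:ℝ) - M + 1 := by
    push_cast
    rw [max_eq_right (by linarith)]
    ring
  rwa [hmx] at h1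
end
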